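/- Let m ≥ 1 and let f : ℤ^m × ℤ^m → 𝕋 be a bicharacter, i.e. f(x+x′,y) = f(x,y)·f(x′,y) and f(x,y+y′) = f(x,y)·f(x,y′) for all x,x′,y,y′ ∈ ℤ^m. Then f is symmetric (f(x,y) = f(y,x) for all x,y) if and only if f is a 2-coboundary, i.e. there exists a function e : ℤ^m → 𝕋 with f(x,y) = e(x)·e(y)·e(x+y)^{−1} for all x,y ∈ ℤ^m. -/

import Mathlib

/-- Every element of the circle group has a square root. -/
lemma circle_sqrt (z : Circle) : ∃ w : Circle, w * w = z := by
  refine ⟨Circle.exp (Complex.arg z / 2), ?_⟩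
  rw [← Circle.exp_add, add_halves]
  exact Circle.exp_arg z

/-- A `𝕋`-valued bicharacter on `ℤ^m` is symmetric if and only if it is a 2-coboundary. -/
theorem stmt2 (m : ℕ) (hm : 1 ≤ m) (f : (Fin m → ℤ) → (Fin m → ℤ) → Circle)
    (hf₁ : ∀ x x' y, f (x + x') y = f x y * f x' y)
    (hf₂ : ∀ x y y', f x (y + y') = f x y * f x y') :
    (∀ x y, f x y = f y x) ↔
      ∃ e : (Fin m → ℤ) → Circle, ∀ x y, f x y = e x * e y * (e (x + y))⁻¹ := by
  constructor
  · intro hsym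
    have h0 : ∀ y, f 0 y = 1 := by
      intro y
      have h := hf₁ 0 0 y
      rw [add_zero] at h
      exact (left_eq_mul.mp h)
    have h0' : ∀ x, f x 0 = 1 := by
      intro x
      have h := hf₂ x 0 0
      rw [add_zero] at h
      exact (left_eq_mul.mp h)
    have hz : ∀ (v w : Fin m → ℤ) (n : ℤ), f (n • v) w = f v w ^ n := by
      intro v w n
      induction n using Int.induction_on with
      | zero => simpa using h0 w
      | succ n ih => rw [add_smul, one_smul, hf₁, ih, zpow_add, zpow_one]
      | pred n ih =>
          have h := hf₁ v (-v) w
          rw [add_neg_cancel, h0] at h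
          have hneg : f (-v) w = (f v w)⁻¹ := by
            rw [eq_inv_iff_mul_eq_one, mul_comm]
            exact h.symm
          rw [sub_smul, one_smul, sub_eq_add_neg, hf₁, ih, hneg, zpow_sub, zpow_one]
    have hz' : ∀ (v w : Fin m → ℤ) (n : ℤ), f v (n • w) = f v w ^ n := by
      intro v w n
      induction n using Int.induction_on with
      | zero => simpa using h0' v
      | succ n ih => rw [add_smul, one_smul, hf₂, ih, zpow_add, zpow_one]
      | pred n ih =>
          have h := hf₂ v w (-w)
          rw [add_neg_cancel, h0'] at h
          have hneg : f v (-w) = (f v w)⁻¹ := by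
            rw [eq_inv_iff_mul_eq_one, mul_comm]
            exact h.symm
          rw [sub_smul, one_smul, sub_eq_add_neg, hf₂, ih, hneg, zpow_sub, zpow_one]
    have hsum : ∀ (w : Fin m → ℤ) (g : Fin m → (Fin m → ℤ)) (s : Finset (Fin m)),
        f (∑ i ∈ s, g i) w = ∏ i ∈ s, f (g i) w := by
      intro w g s
      induction s using Finset.induction_on with
      | empty => simpa using h0 w
      | insert _ _ hnmem ih =>
          rw [Finset.sum_insert hnmem, Finset.prod_insert hnmem, hf₁, ih]
    have hsum' : ∀ (v : Fin m → ℤ) (g : Fin m → (Fin m → ℤ)) (s : Finset (Fin m)),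
        f v (∑ i ∈ s, g i) = ∏ i ∈ s, f v (g i) := by
      intro v g s
      induction s using Finset.induction_on with
      | empty => simpa using h0' v
      | insert _ _ hnmem ih =>
          rw [Finset.sum_insert hnmem, Finset.prod_insert hnmem, hf₂, ih]
    have single_smul : ∀ (i : Fin m) (n : ℤ),
        Pi.single (M := fun _ : Fin m => ℤ) i n = n • Pi.single i 1 := by
      intro i n
      rw [← Pi.single_smul]
      simp
    set c : Fin m → Fin m → Circle :=
      fun i j => f (Pi.single i 1) (Pi.single j 1) with hc
    have key : ∀ x y, f x y = ∏ p : Fin m × Fin m, c p.1 p.2 ^ (x p.1 * y p.2) := by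
      intro x y
      rw [Fintype.prod_prod_type]
      conv_lhs => rw [← Finset.univ_sum_single x]
      rw [hsum]
      refine Finset.prod_congr rfl fun i _ => ?_
      rw [single_smul i (x i), hz]
      conv_lhs => rw [← Finset.univ_sum_single y, hsum', ← Finset.prod_zpow]
      refine Finset.prod_congr rfl fun j _ => ?_
      rw [single_smul j (y j), hz', ← zpow_mul, mul_comm (y j) (x i)]
    have csym : ∀ i j, c i j = c j i := fun i j => hsym _ _
    choose r hr using fun i => circle_sqrt (c i i)⁻¹
    set d : Fin m → Fin m → Circle :=
      fun i j => if i < j then (c i j)⁻¹ else if i = j then r i else 1 with hd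
    have hdd : ∀ i j, d i j * d j i = (c i j)⁻¹ := by
      intro i j
      rcases lt_trichotomy i j with h | h | h
      · simp [hd, h, lt_asymm h, h.ne', h.ne]
      · subst h; simp [hd, hr]
      · simp [hd, h, lt_asymm h, h.ne', h.ne, csym i j]
    refine ⟨fun x => ∏ p : Fin m × Fin m, d p.1 p.2 ^ (x p.1 * x p.2), fun x y => ?_⟩
    have swap : (∏ p : Fin m × Fin m, d p.2 p.1 ^ (-(x p.1 * y p.2))) =
        ∏ p : Fin m × Fin m, d p.1 p.2 ^ (-(x p.2 * y p.1)) :=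
      Fintype.prod_equiv (Equiv.prodComm _ _) _ _ (fun p => rfl)
    calc f x y = ∏ p : Fin m × Fin m, c p.1 p.2 ^ (x p.1 * y p.2) := key x y
      _ = ∏ p : Fin m × Fin m, (d p.1 p.2 * d p.2 p.1) ^ (-(x p.1 * y p.2)) := by
          refine Finset.prod_congr rfl fun p _ => ?_
          rw [hdd, zpow_neg, inv_zpow, inv_inv]
      _ = (∏ p : Fin m × Fin m, d p.1 p.2 ^ (-(x p.1 * y p.2))) *
            ∏ p : Fin m × Fin m, d p.2 p.1 ^ (-(x p.1 * y p.2)) := by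
          rw [← Finset.prod_mul_distrib]
          exact Finset.prod_congr rfl fun p _ => mul_zpow _ _ _
      _ = ∏ p : Fin m × Fin m,
            d p.1 p.2 ^ (-(x p.1 * y p.2) + -(x p.2 * y p.1)) := by
          rw [swap, ← Finset.prod_mul_distrib]
          exact Finset.prod_congr rfl fun p _ => (zpow_add _ _ _).symm
      _ = ∏ p : Fin m × Fin m,
            d p.1 p.2 ^ (x p.1 * x p.2) * d p.1 p.2 ^ (y p.1 * y p.2) *
              (d p.1 p.2 ^ ((x + y) p.1 * (x + y) p.2))⁻¹ := by
          refine Finset.prod_congr rfl fun p _ => ?_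
          rw [← zpow_neg, ← zpow_add, ← zpow_add]
          congr 1
          simp only [Pi.add_apply]
          ring
      _ = _ := by
          rw [Finset.prod_mul_distrib, Finset.prod_mul_distrib, Finset.prod_inv_distrib]
  · rintro ⟨e, he⟩ x y
    rw [he x y, he y x, add_comm y x, mul_comm (e x) (e y)]
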